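/- Let E be a Banach space, p ∈ (1,∞), μ ∈ (1/p,1], and let T > 0 be finite. For every u ∈ W^1_{p,μ}((0,T);E) the limit u(0) := lim_{t→0+} u(t) exists in E, and there is a constant C = C(p,μ,T) such that ‖u(0)‖_E ≤ C (‖u‖_{L_{p,μ}((0,T);E)} + ‖u'‖_{L_{p,μ}((0,T);E)}). Thus the temporal trace u ↦ u(0) is a bounded linear map from W^1_{p,μ}((0,T);E) to E. -/

import Mathlib

open MeasureTheory Set Filter Topology
open scoped ENNReal NNReal

noncomputable section

/-- The interval `(0,T)` for `T ∈ (0,∞]`. -/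
def Iset (T : ℝ≥0∞) : Set ℝ := {t : ℝ | 0 < t ∧ ENNReal.ofReal t < T}

/-- The `p`-th power of the `L_{p,μ}(I;E)` norm of `f`. -/
def wInt (p μ : ℝ) (I : Set ℝ) {E : Type*} [NormedAddCommGroup E] (f : ℝ → E) : ℝ≥0∞ :=
  ∫⁻ t in I, ENNReal.ofReal (t ^ (p * (1 - μ)) * ‖f t‖ ^ p)

/-- The norm of `L_{p,μ}(I;E)`. -/
def wNorm (p μ : ℝ) (I : Set ℝ) {E : Type*} [NormedAddCommGroup E] (f : ℝ → E) : ℝ≥0∞ :=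
  (wInt p μ I f) ^ (1 / p)

/-- Membership in `L_{p,μ}(I;E)`. -/
def MemWLp (p μ : ℝ) (I : Set ℝ) {E : Type*} [NormedAddCommGroup E] (f : ℝ → E) : Prop :=
  AEStronglyMeasurable f (MeasureTheory.volume.restrict I) ∧ wInt p μ I f < ⊤

/-- `u` is locally absolutely continuous on the interval `I` with a.e. derivative `u'`,
expressed via the fundamental theorem of calculus. -/
def LocAC (I : Set ℝ) {E : Type*} [NormedAddCommGroup E] [NormedSpace ℝ E] (u u' : ℝ → E) : Prop :=
  ∀ a b : ℝ, a ∈ I → b ∈ I → a ≤ b →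
    IntegrableOn u' (Ioo a b) ∧ u b - u a = ∫ t in Ioo a b, u' t

/-- Membership in the weighted Sobolev space `W^1_{p,μ}(I;E)`. -/
def MemW1 (p μ : ℝ) (I : Set ℝ) {E : Type*} [NormedAddCommGroup E] [NormedSpace ℝ E]
    (u u' : ℝ → E) : Prop :=
  MemWLp p μ I u ∧ MemWLp p μ I u' ∧ LocAC I u u'

section Aux

variable {E : Type*} [NormedAddCommGroup E]

/-- Finiteness of the weight integral appearing in the Hölder bound. -/
lemma Kfin_aux (p μ : ℝ) (hp : 1 < p) (hμ : 1 / p < μ) (T : ℝ) (hT : 0 < T) :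
    ∫⁻ t in Ioo (0:ℝ) T, ENNReal.ofReal (t ^ ((μ - 1) * (p / (p - 1)))) < ⊤ := by
  have hp0 : (0:ℝ) < p := by linarith
  have hp1 : (0:ℝ) < p - 1 := by linarith
  have hμp : 1 < μ * p := by
    have := (div_lt_iff₀ hp0).mp hμ
    linarith
  have hexp : (-1 : ℝ) < (μ - 1) * (p / (p - 1)) := by
    rw [mul_div_assoc', lt_div_iff₀ hp1]
    nlinarith
  have hint : IntegrableOn (fun t : ℝ => t ^ ((μ - 1) * (p / (p - 1)))) (Ioo (0:ℝ) T) :=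
    (intervalIntegral.integrableOn_Ioo_rpow_iff hT).mpr hexp
  have hfin := hint.2
  refine lt_of_le_of_lt (lintegral_mono fun t => ?_) hfin
  calc ENNReal.ofReal (t ^ ((μ - 1) * (p / (p - 1))))
      ≤ ENNReal.ofReal ‖t ^ ((μ - 1) * (p / (p - 1)))‖ :=
        ENNReal.ofReal_le_ofReal (le_abs_self _)
    _ = (‖t ^ ((μ - 1) * (p / (p - 1)))‖₊ : ℝ≥0∞) := ofReal_norm _

/-- Weighted Hölder inequality on `(0,T)`. -/
lemma holder_aux (p μ : ℝ) (hp : 1 < p) (T : ℝ) (v : ℝ → E)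
    (hv : AEStronglyMeasurable v (MeasureTheory.volume.restrict (Ioo (0:ℝ) T))) :
    ∫⁻ t in Ioo (0:ℝ) T, (‖v t‖₊ : ℝ≥0∞) ≤
      (wInt p μ (Ioo 0 T) v) ^ (1/p) *
      (∫⁻ t in Ioo (0:ℝ) T, ENNReal.ofReal (t ^ ((μ - 1) * (p / (p - 1))))) ^ (1 / (p/(p-1))) := by
  have hp0 : (0:ℝ) < p := by linarith
  set q := p / (p - 1) with hq
  have hpq : p.HolderConjugate q := Real.HolderConjugate.conjExponent hp
  set ν := MeasureTheory.volume.restrict (Ioo (0:ℝ) T) with hν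
  set f : ℝ → ℝ≥0∞ := fun t => ENNReal.ofReal (t ^ (1 - μ) * ‖v t‖) with hf
  set g : ℝ → ℝ≥0∞ := fun t => ENNReal.ofReal (t ^ (μ - 1)) with hg
  have hfm : AEMeasurable f ν := by
    refine ENNReal.measurable_ofReal.comp_aemeasurable ?_
    exact ((by measurability : Measurable fun t : ℝ => t ^ (1 - μ)).aemeasurable.mul
      hv.norm.aemeasurable)
  have hgm : AEMeasurable g ν := by
    refine ENNReal.measurable_ofReal.comp_aemeasurable ?_
    exact (by measurability : Measurable fun t : ℝ => t ^ (μ - 1)).aemeasurable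
  have key := ENNReal.lintegral_mul_le_Lp_mul_Lq ν hpq hfm hgm
  have h1 : ∫⁻ t, (f * g) t ∂ν = ∫⁻ t in Ioo (0:ℝ) T, (‖v t‖₊ : ℝ≥0∞) := by
    rw [hν]
    refine setLIntegral_congr_fun measurableSet_Ioo ?_
    intro t ht
    have ht0 : 0 < t := ht.1
    have h1μ : (0:ℝ) ≤ t ^ (1 - μ) := Real.rpow_nonneg ht0.le _
    show ENNReal.ofReal (t ^ (1 - μ) * ‖v t‖) * ENNReal.ofReal (t ^ (μ - 1))
        = (‖v t‖₊ : ℝ≥0∞)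
    rw [← ENNReal.ofReal_mul (by positivity)]
    have : t ^ (1 - μ) * ‖v t‖ * t ^ (μ - 1) = ‖v t‖ := by
      rw [mul_right_comm, ← Real.rpow_add ht0]
      norm_num
    rw [this]; exact ofReal_norm _
  have h2 : ∫⁻ t, f t ^ p ∂ν = wInt p μ (Ioo 0 T) v := by
    rw [hν, wInt]
    refine setLIntegral_congr_fun measurableSet_Ioo ?_
    intro t ht
    have ht0 : (0:ℝ) ≤ t := ht.1.le
    show ENNReal.ofReal (t ^ (1 - μ) * ‖v t‖) ^ p
        = ENNReal.ofReal (t ^ (p * (1 - μ)) * ‖v t‖ ^ p)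
    rw [ENNReal.ofReal_rpow_of_nonneg (by positivity) hp0.le,
      Real.mul_rpow (Real.rpow_nonneg ht0 _) (norm_nonneg _)]
    rw [← Real.rpow_mul ht0, mul_comm (1 - μ) p]
  have h3 : ∫⁻ t, g t ^ q ∂ν
      = ∫⁻ t in Ioo (0:ℝ) T, ENNReal.ofReal (t ^ ((μ - 1) * q)) := by
    rw [hν]
    refine setLIntegral_congr_fun measurableSet_Ioo ?_
    intro t ht
    have ht0 : (0:ℝ) ≤ t := ht.1.le
    show ENNReal.ofReal (t ^ (μ - 1)) ^ q = ENNReal.ofReal (t ^ ((μ - 1) * q))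
    rw [ENNReal.ofReal_rpow_of_nonneg (Real.rpow_nonneg ht0 _) hpq.symm.nonneg,
      ← Real.rpow_mul ht0]
  rw [h1, h2, h3] at key
  exact key

end Aux

/-- The temporal trace at `t = 0` on `W^1_{p,μ}((0,T);E)` for finite `T`:
the limit `u(0) = lim_{t→0⁺} u(t)` exists and `‖u(0)‖ ≤ C (‖u‖_{L_{p,μ}} + ‖u'‖_{L_{p,μ}})`
with `C = C(p,μ,T)`. -/
theorem stmt_16 {E : Type*} [NormedAddCommGroup E] [NormedSpace ℝ E] [CompleteSpace E]
    (p μ : ℝ) (hp : 1 < p) (hμ : 1 / p < μ) (hμ1 : μ ≤ 1)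
    (T : ℝ) (hT : 0 < T) :
    ∃ C : ℝ, 0 < C ∧ ∀ u u' : ℝ → E, MemW1 p μ (Ioo 0 T) u u' →
      ∃ x : E,
        Tendsto u (nhdsWithin 0 (Ioi 0)) (nhds x) ∧
        ‖x‖ ≤ C * ((wNorm p μ (Ioo 0 T) u).toReal + (wNorm p μ (Ioo 0 T) u').toReal) := by
  have hp0 : (0:ℝ) < p := by linarith
  set q := p / (p - 1) with hq
  set KE : ℝ≥0∞ :=
    (∫⁻ t in Ioo (0:ℝ) T, ENNReal.ofReal (t ^ ((μ - 1) * q))) ^ (1/q) with hKE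
  have hq0 : 0 < q := div_pos hp0 (by linarith)
  have hKEfin : KE ≠ ⊤ := by
    refine (ENNReal.rpow_lt_top_of_nonneg (by positivity) ?_).ne
    exact (Kfin_aux p μ hp hμ T hT).ne
  set KR : ℝ := KE.toReal with hKR
  have hKR0 : 0 ≤ KR := ENNReal.toReal_nonneg
  set X : ℝ := (T/2) ^ (p*(1-μ)) * (T/4) with hXdef
  have hX : 0 < X := by
    refine mul_pos (Real.rpow_pos_of_pos (by linarith) _) (by linarith)
  set c1 : ℝ := X ^ (-(1/p)) with hc1def
  have hc1 : 0 < c1 := Real.rpow_pos_of_pos hX _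
  refine ⟨c1 + KR + 1, by positivity, ?_⟩
  rintro u u' ⟨⟨humeas, huint⟩, ⟨hu'meas, hu'int⟩, hAC⟩
  set I := Ioo (0:ℝ) T with hI
  set Mu : ℝ := (wNorm p μ I u).toReal with hMu
  set Mu' : ℝ := (wNorm p μ I u').toReal with hMu'
  have hMu0 : 0 ≤ Mu := ENNReal.toReal_nonneg
  have hMu'0 : 0 ≤ Mu' := ENNReal.toReal_nonneg
  -- Hölder for u'
  have hH : ∫⁻ t in I, (‖u' t‖₊ : ℝ≥0∞) ≤ wNorm p μ I u' * KE := by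
    have := holder_aux p μ hp T u' hu'meas
    rw [wNorm]
    exact this
  have hwn' : wNorm p μ I u' ≠ ⊤ := by
    rw [wNorm]
    exact (ENNReal.rpow_lt_top_of_nonneg (by positivity) hu'int.ne).ne
  have hfin : ∫⁻ t in I, (‖u' t‖₊ : ℝ≥0∞) < ⊤ :=
    lt_of_le_of_lt hH (ENNReal.mul_lt_top hwn'.lt_top hKEfin.lt_top)
  have hIntOn : IntegrableOn u' I := ⟨hu'meas, hfin⟩
  -- real-valued Hölder bound
  have hRInt : ∫ t in I, ‖u' t‖ ≤ Mu' * KR := by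
    rw [integral_norm_eq_lintegral_enorm hu'meas]
    have h := ENNReal.toReal_mono (by
      exact ENNReal.mul_ne_top hwn' hKEfin) hH
    rwa [ENNReal.toReal_mul] at h
  -- continuity of u on [T/2, 3T/4]
  have hTsub : Icc (T/2) (3*T/4) ⊆ I := by
    intro t ht
    exact ⟨lt_of_lt_of_le (by linarith) ht.1, lt_of_le_of_lt ht.2 (by linarith)⟩
  have hIntJ : IntegrableOn u' (Icc (T/2) (3*T/4)) := hIntOn.mono_set hTsub
  have hle34 : T/2 ≤ 3*T/4 := by linarith
  have hueq : ∀ t ∈ Icc (T/2) (3*T/4), u t = u (T/2) + ∫ s in (T/2)..t, u' s := by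
    intro t ht
    obtain ⟨hi, he⟩ := hAC (T/2) t (hTsub ⟨le_refl _, hle34⟩) (hTsub ht) ht.1
    rw [intervalIntegral.integral_of_le ht.1, integral_Ioc_eq_integral_Ioo, ← he]
    abel
  have hcont : ContinuousOn u (Icc (T/2) (3*T/4)) := by
    refine ContinuousOn.congr ?_ hueq
    refine continuousOn_const.add ?_
    have h' : IntegrableOn u' (uIcc (T/2) (3*T/4)) := by rwa [uIcc_of_le hle34]
    simpa [uIcc_of_le hle34] using intervalIntegral.continuousOn_primitive_interval (μ := volume) h'
  -- choose b minimizing ‖u‖ on [T/2, 3T/4]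
  obtain ⟨b, hbJ, hbmin⟩ :=
    isCompact_Icc.exists_isMinOn (nonempty_Icc.mpr hle34) hcont.norm
  have hbI : b ∈ I := hTsub hbJ
  have hb0 : 0 < b := hbI.1
  have hbT : b < T := hbI.2
  -- lower bound on wInt u
  have hXub : X * ‖u b‖ ^ p ≤ (wInt p μ I u).toReal := by
    have hsub : Ioo (T/2) (3*T/4) ⊆ I := fun t ht =>
      hTsub ⟨ht.1.le, ht.2.le⟩
    have hle : ENNReal.ofReal ((T/2) ^ (p*(1-μ)) * ‖u b‖ ^ p) * volume (Ioo (T/2) (3*T/4))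
        ≤ wInt p μ I u := by
      rw [← setLIntegral_const]
      refine le_trans ?_ (lintegral_mono' (Measure.restrict_mono hsub le_rfl) le_rfl)
      refine lintegral_mono_ae ?_
      rw [ae_restrict_iff' measurableSet_Ioo]
      refine Filter.Eventually.of_forall fun t ht => ?_
      refine ENNReal.ofReal_le_ofReal ?_
      have h1 : (T/2) ^ (p*(1-μ)) ≤ t ^ (p*(1-μ)) :=
        Real.rpow_le_rpow (by linarith) ht.1.le (by nlinarith)
      have h2 : ‖u b‖ ^ p ≤ ‖u t‖ ^ p :=
        Real.rpow_le_rpow (norm_nonneg _) (hbmin ⟨ht.1.le, ht.2.le⟩) hp0.le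
      have h3 : (0:ℝ) ≤ ‖u b‖ ^ p := Real.rpow_nonneg (norm_nonneg _) _
      exact mul_le_mul h1 h2 h3 (Real.rpow_nonneg (by linarith [ht.1]) _)
    have hvol : volume (Ioo (T/2) (3*T/4)) = ENNReal.ofReal (T/4) := by
      rw [Real.volume_Ioo]
      ring_nf
    rw [hvol, ← ENNReal.ofReal_mul (by positivity)] at hle
    have h := ENNReal.toReal_mono huint.ne hle
    rw [ENNReal.toReal_ofReal (by positivity)] at h
    calc X * ‖u b‖ ^ p = (T/2) ^ (p*(1-μ)) * ‖u b‖ ^ p * (T/4) := by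
          rw [hXdef]; ring
      _ ≤ (wInt p μ I u).toReal := h
  have hMup : (wInt p μ I u).toReal = Mu ^ p := by
    rw [hMu, wNorm, ENNReal.toReal_rpow, ← ENNReal.rpow_mul,
      one_div_mul_cancel hp0.ne', ENNReal.rpow_one]
  have hub : ‖u b‖ ≤ c1 * Mu := by
    by_contra hcon
    push_neg at hcon
    have h1 : (c1*Mu) ^ p < ‖u b‖ ^ p :=
      Real.rpow_lt_rpow (by positivity) hcon hp0
    have hc1p : c1 ^ p = X⁻¹ := by
      rw [hc1def, ← Real.rpow_mul hX.le, show -(1/p) * p = -1 by field_simp]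
      exact Real.rpow_neg_one X
    have h2 : (c1*Mu) ^ p = Mu ^ p / X := by
      rw [Real.mul_rpow hc1.le hMu0, hc1p, inv_mul_eq_div]
    rw [h2] at h1
    have h3 : Mu ^ p < ‖u b‖ ^ p * X := (div_lt_iff₀ hX).mp h1
    rw [mul_comm] at h3
    rw [hMup] at hXub
    linarith
  -- define the trace value
  set x : E := u b - ∫ s in Ioo (0:ℝ) b, u' s with hxdef
  have hIu : IntegrableOn u' (Ioo (0:ℝ) b) :=
    hIntOn.mono_set (Ioo_subset_Ioo le_rfl hbT.le)
  -- identity for u near 0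
  have hsplit : ∀ t ∈ Ioo (0:ℝ) b, u t = x + ∫ s in Ioc (0:ℝ) t, u' s := by
    intro t ht
    obtain ⟨hi, he⟩ := hAC t b ⟨ht.1, lt_trans ht.2 hbT⟩ hbI ht.2.le
    have hun : Ioc (0:ℝ) t ∪ Ioo t b = Ioo 0 b := Ioc_union_Ioo_eq_Ioo ht.1.le ht.2
    have hdisj : Disjoint (Ioc (0:ℝ) t) (Ioo t b) := by
      refine Set.disjoint_left.mpr fun s hs hs' => ?_
      exact absurd hs'.1 (not_lt.mpr hs.2)
    have hsum : ∫ s in Ioo (0:ℝ) b, u' s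
        = (∫ s in Ioc (0:ℝ) t, u' s) + ∫ s in Ioo t b, u' s := by
      rw [← hun]
      exact setIntegral_union hdisj measurableSet_Ioo
        (hIu.mono_set (hun ▸ subset_union_left))
        (hIu.mono_set (hun ▸ subset_union_right))
    calc u t = u b - (u b - u t) := by abel
      _ = u b - ∫ s in Ioo t b, u' s := by rw [he]
      _ = x + ∫ s in Ioc (0:ℝ) t, u' s := by rw [hxdef, hsum]; abel
  -- the primitive tends to 0 at 0⁺
  have hIcc : IntegrableOn u' (Icc (0:ℝ) b) := by
    rw [integrableOn_Icc_iff_integrableOn_Ioo]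
    exact hIu
  have htend0 : Tendsto (fun t => ∫ s in Ioc (0:ℝ) t, u' s) (𝓝[>] (0:ℝ)) (𝓝 0) := by
    have hprim0 : ContinuousOn (fun t => ∫ s in (0:ℝ)..t, u' s) (Icc 0 b) := by
      have h' : IntegrableOn u' (uIcc (0:ℝ) b) := by rwa [uIcc_of_le hb0.le]
      simpa [uIcc_of_le hb0.le] using intervalIntegral.continuousOn_primitive_interval (μ := volume) h'
    have h0 : Tendsto (fun t => ∫ s in (0:ℝ)..t, u' s) (𝓝[Icc (0:ℝ) b] 0)
        (𝓝 (∫ s in (0:ℝ)..(0:ℝ), u' s)) := hprim0 0 (left_mem_Icc.mpr hb0.le)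
    rw [intervalIntegral.integral_same] at h0
    have hmem : Icc (0:ℝ) b ∈ 𝓝[>] (0:ℝ) :=
      Filter.mem_of_superset (Ioo_mem_nhdsGT_of_mem ⟨le_refl _, hb0⟩) Ioo_subset_Icc_self
    have h1 : Tendsto (fun t => ∫ s in (0:ℝ)..t, u' s) (𝓝[>] (0:ℝ)) (𝓝 0) :=
      h0.mono_left (nhdsWithin_le_of_mem hmem)
    refine h1.congr' ?_
    filter_upwards [self_mem_nhdsWithin] with t ht
    rw [intervalIntegral.integral_of_le (le_of_lt ht)]
  have hxtend : Tendsto u (𝓝[>] (0:ℝ)) (𝓝 x) := by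
    have h1 : Tendsto (fun t => x + ∫ s in Ioc (0:ℝ) t, u' s) (𝓝[>] (0:ℝ)) (𝓝 (x + 0)) :=
      tendsto_const_nhds.add htend0
    rw [add_zero] at h1
    refine h1.congr' ?_
    filter_upwards [Ioo_mem_nhdsGT_of_mem ⟨le_refl (0:ℝ), hb0⟩] with t ht
    exact (hsplit t ht).symm
  refine ⟨x, hxtend, ?_⟩
  -- norm bound
  have hxb : ‖x‖ ≤ ‖u b‖ + ∫ s in I, ‖u' s‖ := by
    calc ‖x‖ ≤ ‖u b‖ + ‖∫ s in Ioo (0:ℝ) b, u' s‖ := norm_sub_le _ _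
      _ ≤ ‖u b‖ + ∫ s in Ioo (0:ℝ) b, ‖u' s‖ := by
          gcongr
          exact norm_integral_le_integral_norm _
      _ ≤ ‖u b‖ + ∫ s in I, ‖u' s‖ := by
          refine add_le_add le_rfl ?_
          refine setIntegral_mono_set hIntOn.norm
            (Filter.Eventually.of_forall fun s => norm_nonneg _) ?_
          exact Filter.Eventually.of_forall fun s hs => Ioo_subset_Ioo le_rfl hbT.le hs
  have : ‖x‖ ≤ c1 * Mu + Mu' * KR := by
    calc ‖x‖ ≤ ‖u b‖ + ∫ s in I, ‖u' s‖ := hxb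
      _ ≤ c1 * Mu + Mu' * KR := add_le_add hub hRInt
  nlinarith [hMu0, hMu'0, hKR0, hc1.le, this]
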